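/- Let $g_n, g_f, g_p$ be independent: $g_u$ Gamma with integer shape $N_u \geq 1$, scale $\Omega_u > 0$; $g_p$ exponential with mean $\Omega_p > 0$. Let $P_{\mathrm{peak}}, I, \xi_n, \xi_f > 0$ and define $P_t^*(g_p) = \min\{P_{\mathrm{peak}}, I/g_p\}$. Then $\Pr\left(g_n \geq \frac{\xi_n}{P_t^*(g_p)},\ g_f \geq \frac{\xi_f}{P_t^*(g_p)}\right) = \left[1 - e^{-I/(\Omega_p P_{\mathrm{peak}})}\right]\prod_{u\in\{n,f\}}\frac{\Gamma[N_u, \xi_u/(\Omega_u P_{\mathrm{peak}})]}{\Gamma(N_u)} + \frac{1}{\Omega_p}\sum_{k=0}^{N_f-1}\sum_{l=0}^{N_n-1}\frac{\xi_n^l\xi_f^k}{k!\,l!\,\Omega_n^l\Omega_f^k I^{k+l}}\,\Gamma\left[k+l+1, \left(\frac{1}{\Omega_p}+\frac{\xi_n}{\Omega_n I}+\frac{\xi_f}{\Omega_f I}\right)\frac{I}{P_{\mathrm{peak}}}\right]\left(\frac{1}{\Omega_p}+\frac{\xi_n}{\Omega_n I}+\frac{\xi_f}{\Omega_f I}\right)^{-(k+l+1)}$.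 -/

import Mathlib

open MeasureTheory ProbabilityTheory Real Set Filter Topology

section Prelim

lemma integrableOn_pow_mul_exp_neg (m : ℕ) {a : ℝ} (ha : 0 ≤ a) :
    IntegrableOn (fun t => t ^ m * Real.exp (-t)) (Ioi a) := by
  have h := (Real.GammaIntegral_convergent (by positivity : (0:ℝ) < m + 1)).mono_set
    (Ioi_subset_Ioi ha)
  refine h.congr_fun (fun x hx => ?_) measurableSet_Ioi
  have hx0 : 0 < x := lt_of_le_of_lt ha hx
  rw [show ((m : ℝ) + 1 - 1) = (m : ℝ) by ring]
  beta_reduce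
  rw [Real.rpow_natCast, mul_comm]

lemma integral_pow_mul_exp_neg_Ioi (m : ℕ) {a : ℝ} (ha : 0 ≤ a) :
    ∫ t in Ioi a, t ^ m * Real.exp (-t)
      = Real.exp (-a) * ∑ j ∈ Finset.range (m + 1), ((m.factorial : ℝ) / j.factorial) * a ^ j := by
  set c : ℕ → ℝ := fun j => (m.factorial : ℝ) / j.factorial with hc
  set F : ℝ → ℝ := fun t => -(Real.exp (-t) * ∑ j ∈ Finset.range (m + 1), c j * t ^ j) with hF
  have hderiv : ∀ x : ℝ, HasDerivAt F (x ^ m * Real.exp (-x)) x := by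
    intro x
    have he : HasDerivAt (fun t : ℝ => Real.exp (-t)) (-Real.exp (-x)) x := by
      simpa using ((hasDerivAt_id x).neg).exp
    have hp : HasDerivAt (fun t : ℝ => ∑ j ∈ Finset.range (m + 1), c j * t ^ j)
        (∑ j ∈ Finset.range (m + 1), c j * (j * x ^ (j - 1))) x := by
      refine HasDerivAt.fun_sum (fun j _ => ?_)
      simpa using (hasDerivAt_pow j x).const_mul (c j)
    have := ((he.fun_mul hp).fun_neg)
    refine this.congr_deriv ?_
    have hshift : ∑ j ∈ Finset.range (m + 1), c j * (j * x ^ (j - 1))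
        = ∑ j ∈ Finset.range m, c j * x ^ j := by
      rw [Finset.sum_range_succ']
      simp only [Nat.cast_zero, zero_mul, mul_zero, add_zero]
      refine Finset.sum_congr rfl (fun j _ => ?_)
      have : c (j + 1) * ((j:ℝ) + 1) = c j := by
        rw [hc]
        field_simp [Nat.factorial_succ]
        rw [Nat.factorial_succ]
        push_cast
        ring
      push_cast
      calc c (j + 1) * (((j:ℝ) + 1) * x ^ j) = (c (j + 1) * ((j:ℝ)+1)) * x ^ j := by ring
        _ = c j * x ^ j := by rw [this]
    rw [hshift]
    have hsplit : ∑ j ∈ Finset.range (m + 1), c j * x ^ j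
        = (∑ j ∈ Finset.range m, c j * x ^ j) + x ^ m := by
      rw [Finset.sum_range_succ, hc]
      simp only []
      rw [div_self (by exact_mod_cast m.factorial_ne_zero : (m.factorial:ℝ) ≠ 0), one_mul]
    rw [hsplit]
    ring
  have htend : Tendsto F atTop (𝓝 0) := by
    have : Tendsto (fun t : ℝ => ∑ j ∈ Finset.range (m + 1), c j * (t ^ j * Real.exp (-t)))
        atTop (𝓝 (∑ j ∈ Finset.range (m + 1), c j * 0)) := by
      exact tendsto_finset_sum _ (fun j _ =>
        (tendsto_pow_mul_exp_neg_atTop_nhds_zero j).const_mul (c j))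
    simp only [mul_zero, Finset.sum_const_zero] at this
    have heq : F = fun t => -(∑ j ∈ Finset.range (m + 1), c j * (t ^ j * Real.exp (-t))) := by
      funext t
      rw [hF]
      simp only [Finset.mul_sum]
      congr 1
      exact Finset.sum_congr rfl (fun j _ => by ring)
    rw [heq]
    simpa using this.neg
  have key := integral_Ioi_of_hasDerivAt_of_tendsto
    (hderiv a).continuousAt.continuousWithinAt (fun x _ => hderiv x)
    (integrableOn_pow_mul_exp_neg m ha) htend
  rw [key, hF]
  simp only [zero_sub, neg_neg, Finset.mul_sum]
  rfl

lemma integrableOn_pow_mul_exp_neg_mul (m : ℕ) {α a : ℝ} (hα : 0 < α) (ha : 0 ≤ a) :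
    IntegrableOn (fun p => p ^ m * Real.exp (-(α * p))) (Ioi a) := by
  have h := (integrableOn_Ioi_comp_mul_left_iff (fun t => t ^ m * Real.exp (-t)) a hα).mpr
    (integrableOn_pow_mul_exp_neg m (by positivity))
  have h2 := h.const_mul ((α ^ m)⁻¹ : ℝ)
  refine MeasureTheory.IntegrableOn.congr_fun h2 (fun x _ => ?_) measurableSet_Ioi
  simp only [mul_pow]
  field_simp

lemma integral_pow_mul_exp_neg_mul_Ioi (m : ℕ) {α : ℝ} (hα : 0 < α) (a : ℝ) :
    ∫ p in Ioi a, p ^ m * Real.exp (-(α * p))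
      = (∫ t in Ioi (α * a), t ^ m * Real.exp (-t)) / α ^ (m + 1) := by
  have key := integral_comp_mul_left_Ioi (fun t => t ^ m * Real.exp (-t)) a hα
  simp only [smul_eq_mul] at key
  have lhs : ∫ p in Ioi a, (α * p) ^ m * Real.exp (-(α * p))
      = α ^ m * ∫ p in Ioi a, p ^ m * Real.exp (-(α * p)) := by
    rw [← integral_const_mul]
    exact setIntegral_congr_fun measurableSet_Ioi (fun x _ => by rw [mul_pow]; ring)
  rw [lhs] at key
  have hαm : (α : ℝ) ^ m ≠ 0 := by positivity
  field_simp at key ⊢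
  rw [pow_succ]
  linarith [key]

open ProbabilityTheory in
lemma gammaMeasure_Ici_eq (n : ℕ) (hn : 1 ≤ n) {r s : ℝ} (hr : 0 < r) (hs : 0 ≤ s) :
    gammaMeasure n r (Ici s)
      = ENNReal.ofReal ((∫ t in Ioi (r * s), t ^ (n - 1) * Real.exp (-t)) / Real.Gamma n) := by
  have hΓ : 0 < Real.Gamma n := Real.Gamma_pos_of_pos (by exact_mod_cast hn)
  have hcast : ((n - 1 : ℕ) : ℝ) = (n : ℝ) - 1 := by
    rw [Nat.cast_sub hn]; norm_num
  rw [gammaMeasure, withDensity_apply _ measurableSet_Ici]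
  have hpdf : ∀ x ∈ Ici s, gammaPDF n r x
      = ENNReal.ofReal (r ^ (n:ℝ) / Real.Gamma n * x ^ ((n:ℝ) - 1) * Real.exp (-(r * x))) :=
    fun x hx => gammaPDF_of_nonneg (le_trans hs hx)
  rw [setLIntegral_congr_fun measurableSet_Ici hpdf]
  have hrw : ∀ x ∈ Ioi s, r ^ (n:ℝ) / Real.Gamma n * x ^ ((n:ℝ) - 1) * Real.exp (-(r * x))
      = (r ^ n / Real.Gamma n) * (x ^ (n - 1) * Real.exp (-(r * x))) := by
    intro x hx
    have hx0 : 0 < x := lt_of_le_of_lt hs hx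
    rw [← hcast, Real.rpow_natCast, Real.rpow_natCast]
    ring
  have hint : IntegrableOn
      (fun x => r ^ (n:ℝ) / Real.Gamma n * x ^ ((n:ℝ) - 1) * Real.exp (-(r * x))) (Ici s) := by
    rw [IntegrableOn, ← restrict_Ioi_eq_restrict_Ici]
    refine MeasureTheory.IntegrableOn.congr_fun
      (((integrableOn_pow_mul_exp_neg_mul (n - 1) hr hs).const_mul (r ^ n / Real.Gamma n)))
      (fun x hx => (hrw x hx).symm) measurableSet_Ioi
  rw [← ofReal_integral_eq_lintegral_ofReal hint ?_]
  · congr 1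
    rw [integral_Ici_eq_integral_Ioi, setIntegral_congr_fun measurableSet_Ioi hrw,
      integral_const_mul, integral_pow_mul_exp_neg_mul_Ioi (n - 1) hr s]
    have hrn : r ^ n = r ^ (n - 1 + 1) := by congr 1; omega
    rw [hrn]
    field_simp
  · rw [EventuallyLE, ae_restrict_iff' measurableSet_Ici]
    refine ae_of_all _ (fun x (hx : s ≤ x) => ?_)
    have hx0 : 0 ≤ x := le_trans hs hx
    have : (0:ℝ) ≤ x ^ ((n:ℝ) - 1) := Real.rpow_nonneg hx0 _
    positivity

lemma tail_div_Gamma (n : ℕ) (hn : 1 ≤ n) {y : ℝ} (hy : 0 ≤ y) :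
    (∫ t in Ioi y, t ^ (n - 1) * Real.exp (-t)) / Real.Gamma n
      = Real.exp (-y) * ∑ j ∈ Finset.range n, y ^ j / j.factorial := by
  have hΓ : Real.Gamma n = (n - 1).factorial := by
    rw [show (n : ℝ) = ((n - 1 : ℕ) : ℝ) + 1 by push_cast [Nat.cast_sub hn]; ring]
    exact Real.Gamma_nat_eq_factorial (n - 1)
  rw [integral_pow_mul_exp_neg_Ioi (n - 1) hy, hΓ, show (n - 1) + 1 = n by omega,
    mul_div_assoc, Finset.sum_div]
  congr 1
  refine Finset.sum_congr rfl (fun j _ => ?_)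
  rw [div_mul_eq_mul_div, mul_comm, mul_div_assoc, mul_div_assoc]
  congr 1
  rw [div_div, mul_comm ((j.factorial : ℝ)), ← div_div,
    div_self (by exact_mod_cast (n-1).factorial_ne_zero : ((n-1).factorial : ℝ) ≠ 0), one_div]

open ProbabilityTheory in
lemma gammaMeasure_Ici_series (n : ℕ) (hn : 1 ≤ n) {r s : ℝ} (hr : 0 < r) (hs : 0 ≤ s) :
    gammaMeasure n r (Ici s)
      = ENNReal.ofReal
          (Real.exp (-(r * s)) * ∑ j ∈ Finset.range n, (r * s) ^ j / j.factorial) := by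
  rw [gammaMeasure_Ici_eq n hn hr hs, tail_div_Gamma n hn (by positivity)]

end Prelim

set_option maxHeartbeats 2000000 in
/-- Theorem 5 of the paper (non-outage probability of the PowIntICSI NOMA system):
with `P_t*(g_p) = min{P_peak, I/g_p}`,
`Pr(g_n ≥ ξn/P_t*(g_p), g_f ≥ ξf/P_t*(g_p))` equals the stated closed form. -/
theorem powinticsi_nonoutage {Ωs : Type*} [MeasureSpace Ωs]
    [IsProbabilityMeasure (ℙ : Measure Ωs)]
    (gn gf gp : Ωs → ℝ) (hmn : Measurable gn) (hmf : Measurable gf) (hmp : Measurable gp)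
    (Nn Nf : ℕ) (hNn : 1 ≤ Nn) (hNf : 1 ≤ Nf)
    (Ωn Ωf Ωp : ℝ) (hΩn : 0 < Ωn) (hΩf : 0 < Ωf) (hΩp : 0 < Ωp)
    (hgn : Measure.map gn ℙ = gammaMeasure Nn Ωn⁻¹)
    (hgf : Measure.map gf ℙ = gammaMeasure Nf Ωf⁻¹)
    (hgp : Measure.map gp ℙ = expMeasure Ωp⁻¹)
    (hind : iIndepFun ![gn, gf, gp] ℙ)
    (I Ppeak ξn ξf : ℝ) (hI : 0 < I) (hP : 0 < Ppeak) (hξn : 0 < ξn) (hξf : 0 < ξf) :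
    (ℙ {ω | ξn / min Ppeak (I / gp ω) ≤ gn ω ∧ ξf / min Ppeak (I / gp ω) ≤ gf ω}).toReal
      = (1 - Real.exp (-I / (Ωp * Ppeak)))
          * ((∫ t in Set.Ioi (ξn / (Ωn * Ppeak)), t ^ (Nn - 1) * Real.exp (-t))
              / Real.Gamma Nn)
          * ((∫ t in Set.Ioi (ξf / (Ωf * Ppeak)), t ^ (Nf - 1) * Real.exp (-t))
              / Real.Gamma Nf)
        + (1 / Ωp) * ∑ k ∈ Finset.range Nf, ∑ l ∈ Finset.range Nn,
            ξn ^ l * ξf ^ k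
              / (Nat.factorial k * Nat.factorial l * Ωn ^ l * Ωf ^ k * I ^ (k + l))
            * (∫ t in Set.Ioi ((1 / Ωp + ξn / (Ωn * I) + ξf / (Ωf * I)) * (I / Ppeak)),
                t ^ (k + l) * Real.exp (-t))
            / (1 / Ωp + ξn / (Ωn * I) + ξf / (Ωf * I)) ^ (k + l + 1) := by
  have hc : (0:ℝ) < I / Ppeak := div_pos hI hP
  set c : ℝ := I / Ppeak with hc_def
  set α : ℝ := 1 / Ωp + ξn / (Ωn * I) + ξf / (Ωf * I) with hα_def
  have hα : 0 < α := by rw [hα_def]; positivity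
  set A : ℝ → ℝ := fun p => ξn / min Ppeak (I / p) with hA_def
  set B : ℝ → ℝ := fun p => ξf / min Ppeak (I / p) with hB_def
  have hA : Measurable A :=
    measurable_const.div (measurable_const.min (measurable_const.div measurable_id))
  have hB : Measurable B :=
    measurable_const.div (measurable_const.min (measurable_const.div measurable_id))
  set μn := gammaMeasure Nn Ωn⁻¹ with hμn_def
  set μf := gammaMeasure Nf Ωf⁻¹ with hμf_def
  set S : Set ((ℝ × ℝ) × ℝ) := {q | A q.2 ≤ q.1.1 ∧ B q.2 ≤ q.1.2} with hS_def
  have hS : MeasurableSet S :=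
    (measurableSet_le (hA.comp measurable_snd) (measurable_fst.comp measurable_fst)).inter
      (measurableSet_le (hB.comp measurable_snd) (measurable_snd.comp measurable_fst))
  have hT : Measurable (fun ω => ((gn ω, gf ω), gp ω)) := (hmn.prodMk hmf).prodMk hmp
  have hmeas3 : ∀ i, Measurable (![gn, gf, gp] i) := by
    intro i; fin_cases i <;> assumption
  have hpair : IndepFun (fun ω => (gn ω, gf ω)) gp ℙ := by
    have h := hind.indepFun_prodMk hmeas3 0 1 2 (by decide) (by decide)
    simpa using h
  have h01 : IndepFun gn gf ℙ := by
    have h := hind.indepFun (show (0 : Fin 3) ≠ 1 by decide)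
    simpa using h
  have hmap : Measure.map (fun ω => ((gn ω, gf ω), gp ω)) ℙ
      = (μn.prod μf).prod (expMeasure Ωp⁻¹) := by
    rw [(indepFun_iff_map_prod_eq_prod_map_map (hmn.prodMk hmf).aemeasurable
        hmp.aemeasurable).mp hpair,
      (indepFun_iff_map_prod_eq_prod_map_map hmn.aemeasurable hmf.aemeasurable).mp h01,
      hgn, hgf, hgp]
  have h1 : ℙ {ω | ξn / min Ppeak (I / gp ω) ≤ gn ω ∧ ξf / min Ppeak (I / gp ω) ≤ gf ω}
      = ((μn.prod μf).prod (expMeasure Ωp⁻¹)) S := by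
    rw [← hmap, Measure.map_apply hT hS]
    rfl
  have hμn_meas : Measurable fun t : ℝ => μn (Ici t) :=
    Antitone.measurable (fun s t hst => measure_mono (Ici_subset_Ici.mpr hst))
  have hμf_meas : Measurable fun t : ℝ => μf (Ici t) :=
    Antitone.measurable (fun s t hst => measure_mono (Ici_subset_Ici.mpr hst))
  haveI : IsProbabilityMeasure μn :=
    isProbabilityMeasure_gammaMeasure (by exact_mod_cast Nat.lt_of_lt_of_le Nat.zero_lt_one hNn :
      (0:ℝ) < Nn) (inv_pos.mpr hΩn)
  haveI : IsProbabilityMeasure μf :=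
    isProbabilityMeasure_gammaMeasure (by exact_mod_cast Nat.lt_of_lt_of_le Nat.zero_lt_one hNf :
      (0:ℝ) < Nf) (inv_pos.mpr hΩf)
  haveI : IsProbabilityMeasure (expMeasure Ωp⁻¹) := isProbabilityMeasure_expMeasure (inv_pos.mpr hΩp)
  have h2 : ((μn.prod μf).prod (expMeasure Ωp⁻¹)) S
      = ∫⁻ p, gammaPDF 1 Ωp⁻¹ p * (μn (Ici (A p)) * μf (Ici (B p))) := by
    rw [Measure.prod_apply_symm hS]
    have hslice : ∀ p : ℝ, (fun xy : ℝ × ℝ => (xy, p)) ⁻¹' S = Ici (A p) ×ˢ Ici (B p) := by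
      intro p; ext xy
      simp only [hS_def, Set.mem_preimage, Set.mem_setOf_eq, Set.mem_prod, Set.mem_Ici]
    simp_rw [hslice, Measure.prod_prod]
    rw [expMeasure, gammaMeasure,
      lintegral_withDensity_eq_lintegral_mul _
        (show Measurable (gammaPDF 1 Ωp⁻¹) from (measurable_gammaPDFReal 1 Ωp⁻¹).ennreal_ofReal)
        (show Measurable fun p : ℝ => μn (Ici (A p)) * μf (Ici (B p)) from
          (hμn_meas.comp hA).mul (hμf_meas.comp hB))]
    rfl

  -- threshold values on the two regions
  have hAp1 : ∀ p ∈ Ioc (0:ℝ) c, A p = ξn / Ppeak := by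
    intro p hp
    have h2 : p * Ppeak ≤ I := by
      have := hp.2; rw [hc_def] at this; exact (le_div_iff₀ hP).mp this
    rw [hA_def]
    simp only
    rw [min_eq_left ((le_div_iff₀ hp.1).mpr (by linarith [h2]))]
  have hBp1 : ∀ p ∈ Ioc (0:ℝ) c, B p = ξf / Ppeak := by
    intro p hp
    have h2 : p * Ppeak ≤ I := by
      have := hp.2; rw [hc_def] at this; exact (le_div_iff₀ hP).mp this
    rw [hB_def]
    simp only
    rw [min_eq_left ((le_div_iff₀ hp.1).mpr (by linarith [h2]))]
  have hmin2 : ∀ p ∈ Ioi c, min Ppeak (I / p) = I / p := by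
    intro p hp
    have hp0 : 0 < p := hc.trans hp
    have hcp : c < p := hp
    rw [hc_def] at hcp
    refine min_eq_right ((div_le_iff₀ hp0).mpr ?_)
    nlinarith [(div_lt_iff₀ hP).mp hcp]
  have hAp2 : ∀ p ∈ Ioi c, A p = ξn * p / I := by
    intro p hp
    have hp0 : 0 < p := hc.trans hp
    rw [hA_def]
    simp only
    rw [hmin2 p hp, div_div_eq_mul_div]
  have hBp2 : ∀ p ∈ Ioi c, B p = ξf * p / I := by
    intro p hp
    have hp0 : 0 < p := hc.trans hp
    rw [hB_def]
    simp only
    rw [hmin2 p hp, div_div_eq_mul_div]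
  have hpdfval : ∀ p : ℝ, 0 ≤ p → gammaPDF 1 Ωp⁻¹ p
      = ENNReal.ofReal (Ωp⁻¹ * Real.exp (-(Ωp⁻¹ * p))) := by
    intro p hp
    rw [gammaPDF_of_nonneg hp]
    norm_num [Real.Gamma_one, Real.rpow_one, Real.rpow_zero]
  -- the exponential integral over (0, c]
  have hExp : ∫⁻ p in Ioc (0:ℝ) c, gammaPDF 1 Ωp⁻¹ p
      = ENNReal.ofReal (1 - Real.exp (-I / (Ωp * Ppeak))) := by
    rw [setLIntegral_congr_fun measurableSet_Ioc
      (fun p (hp : p ∈ Ioc (0:ℝ) c) => hpdfval p hp.1.le)]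
    have hcont : Continuous fun p : ℝ => Ωp⁻¹ * Real.exp (-(Ωp⁻¹ * p)) :=
      continuous_const.mul ((continuous_const.mul continuous_id).neg.rexp)
    rw [← ofReal_integral_eq_lintegral_ofReal (hcont.integrableOn_Ioc)
      (ae_of_all _ (fun p => by positivity))]
    congr 1
    rw [← intervalIntegral.integral_of_le hc.le]
    have hderiv : ∀ x ∈ uIcc (0:ℝ) c, HasDerivAt (fun q => -Real.exp (-(Ωp⁻¹ * q)))
        (Ωp⁻¹ * Real.exp (-(Ωp⁻¹ * x))) x := by
      intro x _
      have h := (((hasDerivAt_id x).const_mul Ωp⁻¹).neg.exp).neg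
      refine h.congr_deriv ?_
      simp [mul_comm]
    rw [intervalIntegral.integral_eq_sub_of_hasDerivAt hderiv
      (hcont.intervalIntegrable 0 c)]
    rw [show -(Ωp⁻¹ * c) = -I / (Ωp * Ppeak) by rw [hc_def]; field_simp]
    simp [Real.exp_zero]
    ring
  -- Part 1 : the integral over (0, c]
  have part1 : ∫⁻ p in Ioc (0:ℝ) c, gammaPDF 1 Ωp⁻¹ p * (μn (Ici (A p)) * μf (Ici (B p)))
      = ENNReal.ofReal (1 - Real.exp (-I / (Ωp * Ppeak)))
        * (ENNReal.ofReal
            ((∫ t in Ioi (ξn / (Ωn * Ppeak)), t ^ (Nn - 1) * Real.exp (-t)) / Real.Gamma Nn)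
          * ENNReal.ofReal
            ((∫ t in Ioi (ξf / (Ωf * Ppeak)), t ^ (Nf - 1) * Real.exp (-t)) / Real.Gamma Nf)) := by
    have hval : ∀ p ∈ Ioc (0:ℝ) c,
        gammaPDF 1 Ωp⁻¹ p * (μn (Ici (A p)) * μf (Ici (B p)))
          = gammaPDF 1 Ωp⁻¹ p *
            (ENNReal.ofReal
              ((∫ t in Ioi (ξn / (Ωn * Ppeak)), t ^ (Nn - 1) * Real.exp (-t)) / Real.Gamma Nn)
            * ENNReal.ofReal
              ((∫ t in Ioi (ξf / (Ωf * Ppeak)), t ^ (Nf - 1) * Real.exp (-t)) / Real.Gamma Nf)) := by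
      intro p hp
      rw [hAp1 p hp, hBp1 p hp, hμn_def, hμf_def,
        gammaMeasure_Ici_eq Nn hNn (inv_pos.mpr hΩn) (by positivity),
        gammaMeasure_Ici_eq Nf hNf (inv_pos.mpr hΩf) (by positivity),
        show Ωn⁻¹ * (ξn / Ppeak) = ξn / (Ωn * Ppeak) by field_simp,
        show Ωf⁻¹ * (ξf / Ppeak) = ξf / (Ωf * Ppeak) by field_simp]
    rw [setLIntegral_congr_fun measurableSet_Ioc hval,
      lintegral_mul_const' _ _ (ENNReal.mul_ne_top ENNReal.ofReal_ne_top ENNReal.ofReal_ne_top),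
      hExp]
  -- Part 2 : the integral over (c, ∞)
  set an : ℝ := ξn / (Ωn * I) with han_def
  set af : ℝ := ξf / (Ωf * I) with haf_def
  have han : 0 < an := by rw [han_def]; positivity
  have haf : 0 < af := by rw [haf_def]; positivity
  have hα_split : α = Ωp⁻¹ + an + af := by rw [hα_def, inv_eq_one_div]
  set G : ℝ → ℝ := fun p => Ωp⁻¹ * Real.exp (-(Ωp⁻¹ * p)) *
      (Real.exp (-(an * p)) * ∑ l ∈ Finset.range Nn, (an * p) ^ l / l.factorial) *
      (Real.exp (-(af * p)) * ∑ k ∈ Finset.range Nf, (af * p) ^ k / k.factorial) with hG_def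
  have hGpt : ∀ p ∈ Ioi c, gammaPDF 1 Ωp⁻¹ p * (μn (Ici (A p)) * μf (Ici (B p)))
      = ENNReal.ofReal (G p) := by
    intro p hp
    have hp0 : 0 < p := hc.trans hp
    have hs1 : (0:ℝ) ≤ ∑ l ∈ Finset.range Nn, (an * p) ^ l / l.factorial :=
      Finset.sum_nonneg fun l _ => by positivity
    have hs2 : (0:ℝ) ≤ ∑ k ∈ Finset.range Nf, (af * p) ^ k / k.factorial :=
      Finset.sum_nonneg fun k _ => by positivity
    rw [hAp2 p hp, hBp2 p hp, hμn_def, hμf_def,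
      gammaMeasure_Ici_series Nn hNn (inv_pos.mpr hΩn) (by positivity),
      gammaMeasure_Ici_series Nf hNf (inv_pos.mpr hΩf) (by positivity),
      show Ωn⁻¹ * (ξn * p / I) = an * p by rw [han_def]; field_simp,
      show Ωf⁻¹ * (ξf * p / I) = af * p by rw [haf_def]; field_simp,
      hpdfval p hp0.le,
      ← ENNReal.ofReal_mul (by positivity),
      ← ENNReal.ofReal_mul (by positivity)]
    congr 1
    simp only [hG_def]
    ring
  have hGsum : ∀ p : ℝ, G p = ∑ k ∈ Finset.range Nf, ∑ l ∈ Finset.range Nn,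
      (Ωp⁻¹ * (an ^ l / l.factorial) * (af ^ k / k.factorial))
        * (p ^ (k + l) * Real.exp (-(α * p))) := by
    intro p
    have hexp : Real.exp (-(Ωp⁻¹ * p)) * Real.exp (-(an * p)) * Real.exp (-(af * p))
        = Real.exp (-(α * p)) := by
      rw [← Real.exp_add, ← Real.exp_add]
      congr 1
      rw [hα_split]; ring
    have hstep : G p = (∑ l ∈ Finset.range Nn, (an * p) ^ l / l.factorial)
        * (∑ k ∈ Finset.range Nf, (af * p) ^ k / k.factorial)
        * (Ωp⁻¹ * Real.exp (-(α * p))) := by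
      rw [hG_def, ← hexp]; ring
    rw [hstep, Finset.sum_mul_sum]
    simp only [Finset.sum_mul]
    rw [Finset.sum_comm]
    refine Finset.sum_congr rfl fun k _ => Finset.sum_congr rfl fun l _ => ?_
    rw [mul_pow, mul_pow, pow_add]
    ring
  have hGnn : ∀ p ∈ Ioi c, 0 ≤ G p := by
    intro p hp
    have hp0 : 0 < p := hc.trans hp
    have hs1 : (0:ℝ) ≤ ∑ l ∈ Finset.range Nn, (an * p) ^ l / l.factorial :=
      Finset.sum_nonneg fun l _ => by positivity
    have hs2 : (0:ℝ) ≤ ∑ k ∈ Finset.range Nf, (af * p) ^ k / k.factorial :=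
      Finset.sum_nonneg fun k _ => by positivity
    simp only [hG_def]
    positivity
  have hGint : IntegrableOn G (Ioi c) := by
    rw [show G = fun p => ∑ k ∈ Finset.range Nf, ∑ l ∈ Finset.range Nn,
        (Ωp⁻¹ * (an ^ l / l.factorial) * (af ^ k / k.factorial))
          * (p ^ (k + l) * Real.exp (-(α * p))) from funext hGsum]
    refine integrable_finset_sum _ (fun k _ => integrable_finset_sum _ (fun l _ => ?_))
    exact (integrableOn_pow_mul_exp_neg_mul (k + l) hα hc.le).const_mul _
  have part2 : ∫⁻ p in Ioi c, gammaPDF 1 Ωp⁻¹ p * (μn (Ici (A p)) * μf (Ici (B p)))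
      = ENNReal.ofReal (∫ p in Ioi c, G p) := by
    rw [setLIntegral_congr_fun measurableSet_Ioi hGpt,
      ← ofReal_integral_eq_lintegral_ofReal hGint
        ((ae_restrict_iff' measurableSet_Ioi).mpr (ae_of_all _ hGnn))]
  have hGval : ∫ p in Ioi c, G p = ∑ k ∈ Finset.range Nf, ∑ l ∈ Finset.range Nn,
      (Ωp⁻¹ * (an ^ l / l.factorial) * (af ^ k / k.factorial))
        * ((∫ t in Ioi (α * c), t ^ (k + l) * Real.exp (-t)) / α ^ (k + l + 1)) := by
    rw [show G = fun p => ∑ k ∈ Finset.range Nf, ∑ l ∈ Finset.range Nn,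
        (Ωp⁻¹ * (an ^ l / l.factorial) * (af ^ k / k.factorial))
          * (p ^ (k + l) * Real.exp (-(α * p))) from funext hGsum]
    rw [integral_finset_sum _ (fun k _ => integrable_finset_sum _ (fun l _ =>
      (integrableOn_pow_mul_exp_neg_mul (k + l) hα hc.le).const_mul _))]
    refine Finset.sum_congr rfl fun k _ => ?_
    rw [integral_finset_sum _ (fun l _ =>
      (integrableOn_pow_mul_exp_neg_mul (k + l) hα hc.le).const_mul _)]
    refine Finset.sum_congr rfl fun l _ => ?_
    rw [integral_const_mul, integral_pow_mul_exp_neg_mul_Ioi (k + l) hα c]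
  -- assemble
  have hsplit : (∫⁻ p, gammaPDF 1 Ωp⁻¹ p * (μn (Ici (A p)) * μf (Ici (B p))))
      = (∫⁻ p in Ioc (0:ℝ) c, gammaPDF 1 Ωp⁻¹ p * (μn (Ici (A p)) * μf (Ici (B p))))
        + ∫⁻ p in Ioi c, gammaPDF 1 Ωp⁻¹ p * (μn (Ici (A p)) * μf (Ici (B p))) := by
    have e1 : ∫⁻ p in Iic (0:ℝ), gammaPDF 1 Ωp⁻¹ p * (μn (Ici (A p)) * μf (Ici (B p))) = 0 := by
      rw [← setLIntegral_congr (Iio_ae_eq_Iic (a := (0:ℝ))),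
        setLIntegral_congr_fun measurableSet_Iio
          (fun p (hp : p < 0) => by rw [gammaPDF_of_neg hp, zero_mul]),
        lintegral_zero]
    calc (∫⁻ p, gammaPDF 1 Ωp⁻¹ p * (μn (Ici (A p)) * μf (Ici (B p))))
        = (∫⁻ p in Ioi (0:ℝ), gammaPDF 1 Ωp⁻¹ p * (μn (Ici (A p)) * μf (Ici (B p))))
          + ∫⁻ p in (Ioi (0:ℝ))ᶜ, gammaPDF 1 Ωp⁻¹ p * (μn (Ici (A p)) * μf (Ici (B p))) :=
        (lintegral_add_compl _ measurableSet_Ioi).symm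
      _ = ∫⁻ p in Ioi (0:ℝ), gammaPDF 1 Ωp⁻¹ p * (μn (Ici (A p)) * μf (Ici (B p))) := by
          rw [compl_Ioi, e1, add_zero]
      _ = _ := by
          rw [← Ioc_union_Ioi_eq_Ioi hc.le,
            lintegral_union measurableSet_Ioi Ioc_disjoint_Ioi_same]
  have hTn_nn : 0 ≤ (∫ t in Ioi (ξn / (Ωn * Ppeak)), t ^ (Nn - 1) * Real.exp (-t))
      / Real.Gamma Nn :=
    div_nonneg (setIntegral_nonneg measurableSet_Ioi (fun t ht => by
      have : 0 < t := lt_trans (by positivity) ht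
      positivity))
      (Real.Gamma_pos_of_pos (by exact_mod_cast Nat.lt_of_lt_of_le Nat.zero_lt_one hNn :
        (0:ℝ) < Nn)).le
  have hTf_nn : 0 ≤ (∫ t in Ioi (ξf / (Ωf * Ppeak)), t ^ (Nf - 1) * Real.exp (-t))
      / Real.Gamma Nf :=
    div_nonneg (setIntegral_nonneg measurableSet_Ioi (fun t ht => by
      have : 0 < t := lt_trans (by positivity) ht
      positivity))
      (Real.Gamma_pos_of_pos (by exact_mod_cast Nat.lt_of_lt_of_le Nat.zero_lt_one hNf :
        (0:ℝ) < Nf)).le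
  have hE_nn : 0 ≤ 1 - Real.exp (-I / (Ωp * Ppeak)) := by
    have : Real.exp (-I / (Ωp * Ppeak)) ≤ Real.exp 0 :=
      Real.exp_le_exp.mpr (by rw [neg_div]; simp; positivity)
    rw [Real.exp_zero] at this
    linarith
  have hG_nn : 0 ≤ ∫ p in Ioi c, G p := setIntegral_nonneg measurableSet_Ioi hGnn
  rw [h1, h2, hsplit, part1, part2,
    ENNReal.toReal_add
      (ENNReal.mul_ne_top ENNReal.ofReal_ne_top
        (ENNReal.mul_ne_top ENNReal.ofReal_ne_top ENNReal.ofReal_ne_top))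
      ENNReal.ofReal_ne_top,
    ENNReal.toReal_mul, ENNReal.toReal_mul,
    ENNReal.toReal_ofReal hE_nn, ENNReal.toReal_ofReal hTn_nn, ENNReal.toReal_ofReal hTf_nn,
    ENNReal.toReal_ofReal hG_nn, hGval]
  congr 1
  · ring
  · rw [Finset.mul_sum]
    refine Finset.sum_congr rfl fun k _ => ?_
    rw [Finset.mul_sum]
    refine Finset.sum_congr rfl fun l _ => ?_
    rw [han_def, haf_def, div_pow, div_pow, mul_pow, mul_pow, pow_add]
    ring
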